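/- Let q be a prime power, k, d positive integers, K = F_{q^{kd}}, and h₀, h₁ ∈ F_{q^k}[X] coprime polynomials of degree at most 2. Let Q ∈ K[X] be an irreducible quadratic polynomial and u₀, u₁, v₀, v₁ ∈ K such that the pairs (1, u₀X + u₁) and (X, v₀X + v₁) form a K[X]-basis of the lattice L_Q (so that Q is a nonzero scalar multiple of −u₀X² + (v₀ − u₁)X + v₁). Set α = −u₀ and δ = −v₀, and let −ρ₁, −ρ₂ ∈ F_{q^{2kd}} be the roots of Q. If ρ₁^q + αρ₂ + δ = 0, then Q divides h₁X^q − h₀ in K[X]. -/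

import Mathlib

open Polynomial

/-- If condition (*) fails, i.e. `ρ₁^q + αρ₂ + δ = 0`, then the irreducible quadratic
`Q` divides `h₁X^q - h₀`, i.e. `Q` is a trap of level `0`. -/
theorem stmt_5 (q k d : ℕ) (hq : IsPrimePow q) (hk : 0 < k) (hd : 0 < d)
    (F0 : Type) [Field F0] [Fintype F0] (hF0 : Fintype.card F0 = q ^ k)
    (K : Type) [Field K] [Fintype K] (hK : Fintype.card K = q ^ (k * d))
    (f : F0 →+* K)
    (L : Type) [Field L] [Fintype L] (hL : Fintype.card L = q ^ (2 * k * d))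
    (g : K →+* L)
    (h₀ h₁ : F0[X]) (hcop : IsCoprime h₀ h₁)
    (hdeg0 : h₀.natDegree ≤ 2) (hdeg1 : h₁.natDegree ≤ 2)
    (Q : K[X]) (hQirr : Irreducible Q) (hQdeg : Q.natDegree = 2)
    (u₀ u₁ v₀ v₁ : K)
    -- the pairs `(1, u₀X + u₁)` and `(X, v₀X + v₁)` form a `K[X]`-basis of
    -- the lattice `L_Q = {(w₀, w₁) : Q ∣ w₀h₀ + w₁h₁}`
    (hbasis : ∀ w : K[X] × K[X],
      Q ∣ w.1 * h₀.map f + w.2 * h₁.map f ↔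
      ∃ r s : K[X], w.1 = r + s * X ∧
        w.2 = r * (C u₀ * X + C u₁) + s * (C v₀ * X + C v₁))
    -- so that `Q` is a nonzero scalar multiple of `-u₀X² + (v₀ - u₁)X + v₁`
    (cQ : K) (hcQ : cQ ≠ 0)
    (hQform : Q = C cQ * (-(C u₀) * X ^ 2 + C (v₀ - u₁) * X + C v₁))
    -- `-ρ₁`, `-ρ₂` in the quadratic extension `L` are the roots of `Q`
    (ρ₁ ρ₂ : L)
    (hQroots : Q.map g = C (g Q.leadingCoeff) * ((X + C ρ₁) * (X + C ρ₂)))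
    (hcond : ρ₁ ^ q + g (-u₀) * ρ₂ + g (-v₀) = 0) :
    Q ∣ h₁.map f * X ^ q - h₀.map f := by
  classical
  obtain ⟨p, e, hpp, he, rfl⟩ := hq
  have hp : p.Prime := Nat.prime_iff.mpr hpp
  -- characteristic of L is p
  obtain ⟨r, hr⟩ := CharP.exists L
  haveI := hr
  obtain ⟨m, hrp, hcardr⟩ := FiniteField.card L r
  have hrEq : r = p := by
    have h1 : r ∣ (p ^ e) ^ (2 * k * d) := by
      rw [← hL, hcardr]
      exact dvd_pow_self r (by exact_mod_cast m.ne_zero)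
    rw [← pow_mul] at h1
    exact (Nat.prime_dvd_prime_iff_eq hrp hp).mp (hrp.dvd_of_dvd_pow h1)
  subst hrEq
  haveI : Fact r.Prime := ⟨hp⟩
  set q : ℕ := r ^ e with hqdef
  have hq1 : 1 < q := Nat.one_lt_pow he.ne' hp.one_lt
  -- the field norm N = q^(k*d) = card K
  set N : ℕ := q ^ (k * d) with hNdef
  have hNp : N = r ^ (e * (k * d)) := by rw [hNdef, hqdef, ← pow_mul]
  have hN1 : 1 < N := Nat.one_lt_pow (by positivity) hq1
  have ginj : Function.Injective g := g.injective
  -- Frobenius-type facts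
  have hfrobN : ∀ x y : L, (x + y) ^ N = x ^ N + y ^ N := by
    intro x y; rw [hNp]; exact add_pow_char_pow x y r (e*(k*d))
  have hnegN : ∀ x : L, (-x) ^ N = -(x ^ N) := by
    intro x
    have h0 := hfrobN x (-x)
    rw [add_neg_cancel, zero_pow (by omega)] at h0
    exact eq_neg_of_add_eq_zero_right h0.symm
  have hfrobq : ∀ x y : L, (x + y) ^ q = x ^ q + y ^ q := by
    intro x y; rw [hqdef]; exact add_pow_char_pow x y r e
  have hnegq : ∀ x : L, (-x) ^ q = -(x ^ q) := by
    intro x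
    have h0 := hfrobq x (-x)
    rw [add_neg_cancel, zero_pow (by omega)] at h0
    exact eq_neg_of_add_eq_zero_right h0.symm
  have hfix : ∀ y : K, (g y) ^ N = g y := by
    intro y
    rw [← map_pow]
    congr 1
    rw [← hK]
    exact FiniteField.pow_card y
  -- the mapped form of Q
  have hform2 : Q.map g =
      C (g cQ) * (-(C (g u₀)) * X ^ 2 + C (g (v₀ - u₁)) * X + C (g v₁)) := by
    rw [hQform]
    simp [Polynomial.map_mul, Polynomial.map_add, Polynomial.map_neg, Polynomial.map_pow]
  have hcQ' : g cQ ≠ 0 := fun h => hcQ (ginj (by rw [h, map_zero]))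
  have hQne : Q ≠ 0 := hQirr.ne_zero
  have hlcne : g Q.leadingCoeff ≠ 0 := fun h => hQne (leadingCoeff_eq_zero.mp (ginj (by rw [h, map_zero])))
  -- coefficient comparison (Vieta)
  have hcoef : ∀ i, (C (g cQ) * (-(C (g u₀)) * X ^ 2 + C (g (v₀ - u₁)) * X + C (g v₁))).coeff i
      = (C (g Q.leadingCoeff) * ((X + C ρ₁) * (X + C ρ₂))).coeff i := by
    intro i; rw [← hform2, hQroots]
  have hprod : ((X : L[X]) + C ρ₁) * (X + C ρ₂)
      = X ^ 2 + C (ρ₁ + ρ₂) * X + C (ρ₁ * ρ₂) := by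
    rw [map_add, map_mul]; ring
  have hc2 := hcoef 2
  have hc1 := hcoef 1
  rw [hprod] at hc2 hc1
  simp [coeff_add, coeff_C_mul, coeff_X_pow, coeff_C, coeff_X] at hc2 hc1
  -- Vieta: g u₁ = g u₀ (ρ₁+ρ₂) + g v₀
  have h2 : g cQ * (g v₀ - g u₁) = g cQ * (-(g u₀ * (ρ₁ + ρ₂))) := by
    rw [← hc2] at hc1; linear_combination hc1
  have h3 := mul_left_cancel₀ hcQ' h2
  have hu1 : g u₁ = g u₀ * (ρ₁ + ρ₂) + g v₀ := by linear_combination -h3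
  -- evaluation facts
  have hsubfix : (g v₀ - g u₁) ^ N = g v₀ - g u₁ := by rw [← map_sub]; exact hfix _
  have hEval : ∀ x : L, eval x (Q.map g)
      = g cQ * (-(g u₀) * x ^ 2 + (g v₀ - g u₁) * x + g v₁) := by
    intro x; rw [hform2]; simp [map_sub]
  have hEvalroots : ∀ x : L, eval x (Q.map g)
      = g Q.leadingCoeff * ((x + ρ₁) * (x + ρ₂)) := by
    intro x; rw [hQroots]; simp
  have hEvalN : ∀ x : L, (eval x (Q.map g)) ^ N = eval (x ^ N) (Q.map g) := by
    intro x
    rw [hEval, hEval]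
    simp only [mul_pow, hfrobN, hnegN, hfix, hsubfix, pow_right_comm]
  have hroot1 : eval (-ρ₁) (Q.map g) = 0 := by
    rw [hEvalroots]; simp
  have hrootN : eval (-(ρ₁ ^ N)) (Q.map g) = 0 := by
    have h := hEvalN (-ρ₁)
    rw [hroot1, zero_pow (by omega), hnegN] at h
    exact h.symm
  have hcases : ρ₁ ^ N = ρ₁ ∨ ρ₁ ^ N = ρ₂ := by
    rw [hEvalroots] at hrootN
    rcases mul_eq_zero.mp hrootN with h | h
    · exact absurd h hlcne
    rcases mul_eq_zero.mp h with h | h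
    · left; linear_combination -h
    · right; linear_combination -h
  -- a fixed point of x ↦ x^N would give a root of Q in K
  have hnotfix : ρ₁ ^ N ≠ ρ₁ := by
    intro hfx
    set R : L[X] := X ^ N - X with hR
    have hRdeg : R.natDegree = N := by
      rw [hR]
      have hlt : (X : L[X]).natDegree < (X ^ N : L[X]).natDegree := by
        rw [natDegree_X, natDegree_X_pow]; omega
      rw [natDegree_sub_eq_left_of_natDegree_lt hlt, natDegree_X_pow]
    have hRne : R ≠ 0 := fun h => by rw [h, natDegree_zero] at hRdeg; omega
    set T := R.roots.toFinset with hT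
    set S := Finset.image (fun z : K => g z) Finset.univ with hS
    have hsub : S ⊆ T := by
      intro x hx
      rw [hS, Finset.mem_image] at hx
      obtain ⟨z, _, rfl⟩ := hx
      rw [hT, Multiset.mem_toFinset, mem_roots hRne]
      simp [IsRoot, hR, hfix z]
    have hcardS : S.card = N := by
      rw [hS, Finset.card_image_of_injective _ ginj, Finset.card_univ, hK]
    have hcardT : T.card ≤ N := by
      refine le_trans (Multiset.toFinset_card_le _) ?_
      have h1 := Polynomial.card_roots' R
      omega
    have hST : S = T := Finset.eq_of_subset_of_card_le hsub (by omega)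
    have hρT : ρ₁ ∈ T := by
      rw [hT, Multiset.mem_toFinset, mem_roots hRne]
      simp [IsRoot, hR, hfx]
    rw [← hST, hS, Finset.mem_image] at hρT
    obtain ⟨z, _, hz⟩ := hρT
    have hQz : Q.eval (-z) = 0 := by
      apply ginj
      rw [map_zero]
      have h4 : eval (g (-z)) (Q.map g) = g (Q.eval (-z)) := by
        rw [eval_map, eval₂_at_apply]
      rw [← h4, map_neg, hz]
      exact hroot1
    obtain ⟨b, hb⟩ := dvd_iff_isRoot.mpr hQz
    rcases hQirr.isUnit_or_isUnit hb with hu | hu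
    · exact not_isUnit_X_sub_C _ hu
    · have hbne : b ≠ 0 := hu.ne_zero
      have h5 := natDegree_mul (X_sub_C_ne_zero (-z)) hbne
      rw [← hb, hQdeg, natDegree_X_sub_C, natDegree_eq_zero_of_isUnit hu] at h5
      omega
  have hρ12 : ρ₁ ^ N = ρ₂ := hcases.resolve_left hnotfix
  have hne : ρ₁ ≠ ρ₂ := fun h => hnotfix (h ▸ hρ12)
  have hρ2N : ρ₂ ^ N = ρ₁ := by
    rw [← hρ12, ← pow_mul]
    have hNN : N * N = Fintype.card L := by
      rw [hL, hNdef, ← pow_add]; congr 1; ring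
    rw [hNN]; exact FiniteField.pow_card ρ₁
  -- the conjugate condition
  have hcondA : ρ₁ ^ q - g u₀ * ρ₂ - g v₀ = 0 := by
    have h := hcond; rw [map_neg, map_neg] at h; linear_combination h
  have hcondB : ρ₂ ^ q - g u₀ * ρ₁ - g v₀ = 0 := by
    have h := congrArg (· ^ N) hcond
    rw [zero_pow (by omega), hfrobN, hfrobN, mul_pow, hfix, hfix,
      hρ2N, pow_right_comm, hρ12] at h
    rw [map_neg, map_neg] at h
    linear_combination h
  -- Q divides X^q + u₀X + u₁
  set P : K[X] := X ^ q + C u₀ * X + C u₁ with hP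
  have hPg : P.map g = X ^ q + C (g u₀) * X + C (g u₁) := by
    rw [hP]
    simp [Polynomial.map_add, Polynomial.map_mul, Polynomial.map_pow]
  have hr1 : IsRoot (P.map g) (-ρ₁) := by
    rw [hPg]
    simp only [IsRoot, eval_add, eval_mul, eval_pow, eval_X, eval_C]
    rw [hnegq]
    linear_combination -hcondA + hu1
  have hr2 : IsRoot (P.map g) (-ρ₂) := by
    rw [hPg]
    simp only [IsRoot, eval_add, eval_mul, eval_pow, eval_X, eval_C]
    rw [hnegq]
    linear_combination -hcondB + hu1
  have hd1 : (X - C (-ρ₁)) ∣ P.map g := dvd_iff_isRoot.mpr hr1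
  have hd2 : (X - C (-ρ₂)) ∣ P.map g := dvd_iff_isRoot.mpr hr2
  have hcp : IsCoprime (X - C (-ρ₁)) (X - C (-ρ₂) : L[X]) := by
    refine isCoprime_X_sub_C_of_isUnit_sub ?_
    have hne' : (-ρ₁) - (-ρ₂) ≠ 0 := fun h => hne (by linear_combination -h)
    exact hne'.isUnit
  have hmul : (X - C (-ρ₁)) * (X - C (-ρ₂)) ∣ P.map g := hcp.mul_dvd hd1 hd2
  have hQgdvd : Q.map g ∣ P.map g := by
    rw [hQroots]
    have hXρ1 : (X + C ρ₁ : L[X]) = X - C (-ρ₁) := by rw [map_neg, sub_neg_eq_add]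
    have hXρ2 : (X + C ρ₂ : L[X]) = X - C (-ρ₂) := by rw [map_neg, sub_neg_eq_add]
    rw [hXρ1, hXρ2, mul_comm]
    exact dvd_trans (associated_mul_unit_left _ _
      (isUnit_C.mpr (isUnit_iff_ne_zero.mpr hlcne))).dvd hmul
  have hQP : Q ∣ P := (map_dvd_map' g).mp hQgdvd
  have hlat : Q ∣ 1 * h₀.map f + (C u₀ * X + C u₁) * h₁.map f :=
    (hbasis (1, C u₀ * X + C u₁)).mpr ⟨1, 0, by ring, by ring⟩
  have heq : h₁.map f * X ^ q - h₀.map f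
      = h₁.map f * P - (1 * h₀.map f + (C u₀ * X + C u₁) * h₁.map f) := by
    rw [hP]; ring
  rw [heq]
  exact dvd_sub (hQP.mul_left _) hlat
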